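/- Let μ ≥ 1, n ≥ 1, and let (A^ε)_{ε ∈ {±1}^μ} be a family of real n×n matrices satisfying the Seifert symmetry (A^ε)ᵀ = A^{−ε} for all ε. Set A(ω) = Σ_{ε ∈ {±1}^μ} ε₁⋯ε_μ · ω₁^{(1−ε₁)/2} ⋯ ω_μ^{(1−ε_μ)/2} · A^ε for ω ∈ ℂ^μ. Then for every ω with |ω_i| = 1 for all i, the conjugate transpose of A(ω) satisfies A(ω)^† = (∏_{i=1}^μ (−conj(ω_i))) · A(ω). -/

import Mathlib

open Matrix BigOperators

/-- The matrix `A(ω) = Σ_{ε ∈ {±1}^μ} ε₁⋯ε_μ · ω₁^{(1−ε₁)/2} ⋯ ω_μ^{(1−ε_μ)/2} · A^ε`,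
where sign tuples are encoded as functions `Fin μ → ℤˣ`. -/
noncomputable def cfMatrixA {μ n : ℕ} (A : (Fin μ → ℤˣ) → Matrix (Fin n) (Fin n) ℝ)
    (ω : Fin μ → ℂ) : Matrix (Fin n) (Fin n) ℂ :=
  ∑ ε : Fin μ → ℤˣ,
    ((((∏ i, (ε i : ℤ)) : ℤ) : ℂ) * ∏ i, ω i ^ ((1 - ((ε i : ℤ))) / 2)) •
      (A ε).map (Complex.ofReal)

/-- if the family `(A^ε)` of real `n × n` matrices satisfies the Seifert
symmetry `(A^ε)ᵀ = A^{−ε}`, then for every `ω ∈ (S¹)^μ` the conjugate transpose of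
`A(ω)` satisfies `A(ω)^† = (∏_{i=1}^μ (−conj(ω_i))) · A(ω)`. -/
theorem cfMatrixA_conjTranspose {μ n : ℕ} (hμ : 1 ≤ μ) (hn : 1 ≤ n)
    (A : (Fin μ → ℤˣ) → Matrix (Fin n) (Fin n) ℝ)
    (hA : ∀ ε : Fin μ → ℤˣ, (A ε)ᵀ = A (-ε))
    (ω : Fin μ → ℂ) (hω : ∀ i, ‖ω i‖ = 1) :
    (cfMatrixA A ω)ᴴ = (∏ i, -starRingEnd ℂ (ω i)) • cfMatrixA A ω := by
  have hone : ∀ i, starRingEnd ℂ (ω i) * ω i = 1 := by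
    intro i
    rw [mul_comm, Complex.mul_conj]
    norm_cast
    rw [Complex.normSq_eq_norm_sq, hω i]; norm_num
  have hmap : ∀ ε : Fin μ → ℤˣ,
      (((A ε).map Complex.ofReal))ᴴ = (A (-ε)).map Complex.ofReal := by
    intro ε
    rw [← hA]
    ext i j
    simp [conjTranspose_apply, Matrix.map_apply]
  have key : ∀ ε : Fin μ → ℤˣ,
      starRingEnd ℂ ((((∏ i, ((-ε) i : ℤ)) : ℤ) : ℂ) *
          ∏ i, ω i ^ ((1 - (((-ε) i : ℤ))) / 2))
      = (∏ i, -starRingEnd ℂ (ω i)) *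
          ((((∏ i, (ε i : ℤ)) : ℤ) : ℂ) * ∏ i, ω i ^ ((1 - ((ε i : ℤ))) / 2)) := by
    intro ε
    rw [_root_.map_mul, map_prod]
    push_cast
    rw [map_prod, ← Finset.prod_mul_distrib, mul_comm, mul_assoc,
      ← Finset.prod_mul_distrib, ← Finset.prod_mul_distrib]
    refine Finset.prod_congr rfl fun i _ => ?_
    rcases Int.units_eq_one_or (ε i) with h | h <;>
      simp [h, Pi.neg_apply, map_zpow₀] <;> ring_nf <;>
      rw [mul_comm, hone i]
  unfold cfMatrixA
  rw [conjTranspose_sum, Finset.smul_sum]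
  rw [← Equiv.sum_comp (Equiv.neg (Fin μ → ℤˣ))]
  refine Finset.sum_congr rfl fun ε _ => ?_
  simp only [Equiv.neg_apply]
  rw [conjTranspose_smul, hmap, neg_neg, smul_smul]
  congr 1
  exact key ε
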